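/- Let Π be an equitable partition of [n] for G and let C_1, C_2 be two cells of Π, neither of which is a singleton. For an eigenvalue λ of A(G), let Y_{λ,Π} be the orthogonal complement of V_λ ∩ U_Π inside V_λ, and for i = 1,2 let W_i = span{proj_{Y_{λ,Π}}(e_x) : x ∈ C_i}. Then proj_{W_1}(e_u) = proj_{W_1}(e_v) for all u, v ∈ C_2 if and only if W_1 ⊥ W_2. -/

import Mathlib

open scoped RealInnerProductSpace


/-- The characteristic vector of a set of vertices, as a vector of Euclidean space `ℝⁿ`. -/
noncomputable def charVec {n : ℕ} (C : Finset (Fin n)) : EuclideanSpace ℝ (Fin n) :=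
  WithLp.toLp 2 (fun v => if v ∈ C then (1 : ℝ) else 0)

/-- The adjacency matrix of `G`, as a linear endomorphism of Euclidean space `ℝⁿ`. -/
noncomputable def adjEnd {n : ℕ} (G : SimpleGraph (Fin n)) [DecidableRel G.Adj] :
    Module.End ℝ (EuclideanSpace ℝ (Fin n)) :=
  Matrix.toEuclideanLin (G.adjMatrix ℝ)

/-- The column space `U_Π` of the characteristic matrix of the partition `P`. -/
noncomputable def charSpace {n : ℕ} (P : Finpartition (Finset.univ : Finset (Fin n))) :
    Submodule ℝ (EuclideanSpace ℝ (Fin n)) :=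
  Submodule.span ℝ (charVec '' (P.parts : Set (Finset (Fin n))))

/-- `Y_{λ,Π}`: the orthogonal complement of `V_λ ∩ U_Π` inside `V_λ`. -/
noncomputable def Ypart {n : ℕ} (G : SimpleGraph (Fin n)) [DecidableRel G.Adj]
    (P : Finpartition (Finset.univ : Finset (Fin n))) (lam : ℝ) :
    Submodule ℝ (EuclideanSpace ℝ (Fin n)) :=
  Module.End.eigenspace (adjEnd G) lam ⊓
    (Module.End.eigenspace (adjEnd G) lam ⊓ charSpace P)ᗮ

/-- `span{proj_{Y_{λ,Π}}(e_x) : x ∈ C}`. -/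
noncomputable def projSpan {n : ℕ} (G : SimpleGraph (Fin n)) [DecidableRel G.Adj]
    (P : Finpartition (Finset.univ : Finset (Fin n))) (lam : ℝ) (C : Finset (Fin n)) :
    Submodule ℝ (EuclideanSpace ℝ (Fin n)) :=
  Submodule.span ℝ
    {v : EuclideanSpace ℝ (Fin n) | ∃ x ∈ C,
      v = ((Submodule.orthogonalProjectionOnto (Ypart G P lam) (EuclideanSpace.single x (1 : ℝ)) :
        Ypart G P lam) : EuclideanSpace ℝ (Fin n))}


open scoped RealInnerProductSpace in
private lemma key_orth {E : Type*} [NormedAddCommGroup E] [InnerProductSpace ℝ E]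
    [FiniteDimensional ℝ E] (T : Module.End ℝ E) (hT : T.IsSymmetric)
    (U : Submodule ℝ E) (hU : ∀ x ∈ U, T x ∈ U) (lam : ℝ) {c w : E}
    (hc : c ∈ U)
    (hw : w ∈ Module.End.eigenspace T lam ⊓ (Module.End.eigenspace T lam ⊓ U)ᗮ) :
    ⟪c, w⟫ = 0 := by
  obtain ⟨hw1, hw2⟩ := hw
  set T' : U →ₗ[ℝ] U := T.restrict hU with hT'def
  have hT' : T'.IsSymmetric := by
    intro x y
    rw [Submodule.coe_inner, Submodule.coe_inner, hT'def,
      LinearMap.restrict_coe_apply, LinearMap.restrict_coe_apply]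
    exact hT x y
  have htop : (⨆ μ : ℝ, Module.End.eigenspace T' μ) = ⊤ :=
    Submodule.orthogonal_eq_bot_iff.mp hT'.orthogonalComplement_iSup_eigenspaces_eq_bot
  have hmem : (⟨c, hc⟩ : U) ∈ ⨆ μ : ℝ, Module.End.eigenspace T' μ := by
    rw [htop]; exact Submodule.mem_top
  refine Submodule.iSup_induction (motive := fun x : U => ⟪(x : E), w⟫ = 0) _ hmem ?_ ?_ ?_
  · intro μ x hx
    have hxE : (x : E) ∈ Module.End.eigenspace T μ := by
      rw [Module.End.mem_eigenspace_iff] at hx ⊢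
      have := congrArg (Subtype.val) hx
      simpa [hT'def, LinearMap.restrict_coe_apply] using this
    by_cases hμ : μ = lam
    · subst hμ
      exact (Submodule.mem_orthogonal _ w).mp hw2 (x : E) ⟨hxE, x.2⟩
    · have := hT.orthogonalFamily_eigenspaces hμ (⟨(x : E), hxE⟩ : Module.End.eigenspace T μ)
        (⟨w, hw1⟩ : Module.End.eigenspace T lam)
      simpa using this
  · simp
  · intro x y hx hy
    rw [Submodule.coe_add, inner_add_left, hx, hy, add_zero]

private lemma euclid_sum_apply {n : ℕ} {ι : Type*} (s : Finset ι)
    (f : ι → EuclideanSpace ℝ (Fin n)) (x : Fin n) :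
    (∑ i ∈ s, f i) x = ∑ i ∈ s, f i x := by
  induction s using Finset.cons_induction with
  | empty => rfl
  | cons i s hi ih => rw [Finset.sum_cons, Finset.sum_cons, ← ih]; rfl

private lemma const_mem_charSpace {n : ℕ} (P : Finpartition (Finset.univ : Finset (Fin n)))
    (f : EuclideanSpace ℝ (Fin n))
    (hf : ∀ D ∈ P.parts, ∀ x ∈ D, ∀ y ∈ D, f x = f y) :
    f ∈ charSpace P := by
  classical
  have hrep : ∀ x : Fin n, x ∈ P.part x := fun x => P.mem_part (Finset.mem_univ x)
  have hEq : f = ∑ D ∈ P.parts, (if h : D.Nonempty then f h.choose else 0) • charVec D := by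
    ext x
    rw [euclid_sum_apply]
    have hx : P.part x ∈ P.parts := P.part_mem.mpr (Finset.mem_univ x)
    rw [Finset.sum_eq_single (P.part x)]
    · have hne : (P.part x).Nonempty := ⟨x, hrep x⟩
      have : ((if h : (P.part x).Nonempty then f h.choose else 0) • charVec (P.part x)) x
          = (if h : (P.part x).Nonempty then f h.choose else 0) * charVec (P.part x) x := rfl
      rw [this, dif_pos hne]
      have hcv : charVec (P.part x) x = 1 := by simp [charVec, hrep x]
      rw [hcv, mul_one]
      exact (hf (P.part x) hx hne.choose hne.choose_spec x (hrep x)).symm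
    · intro D hD hne
      have hxD : x ∉ D := fun hxD => hne (P.eq_of_mem_parts hD hx hxD (hrep x))
      have : ((if h : D.Nonempty then f h.choose else 0) • charVec D) x
          = (if h : D.Nonempty then f h.choose else 0) * charVec D x := rfl
      rw [this]
      simp [charVec, hxD]
    · intro h; exact absurd hx h
  rw [hEq]
  exact Submodule.sum_mem _ fun D hD =>
    Submodule.smul_mem _ _ (Submodule.subset_span ⟨D, hD, rfl⟩)

open Matrix in
private lemma adjEnd_charVec {n : ℕ} (G : SimpleGraph (Fin n)) [DecidableRel G.Adj]
    (D : Finset (Fin n)) (x : Fin n) :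
    adjEnd G (charVec D) x = ((D.filter fun d => G.Adj x d).card : ℝ) := by
  classical
  have h1 : adjEnd G (charVec D) x = (G.adjMatrix ℝ *ᵥ (fun u => charVec D u)) x := rfl
  rw [h1, SimpleGraph.adjMatrix_mulVec_apply]
  have : ∀ u, charVec D u = if u ∈ D then (1:ℝ) else 0 := fun u => rfl
  simp_rw [this]
  rw [Finset.sum_ite_mem, Finset.sum_const, nsmul_eq_mul, mul_one]
  congr 1
  congr 1
  ext u
  simp [SimpleGraph.mem_neighborFinset, and_comm]

private lemma charSpace_invariant {n : ℕ} (G : SimpleGraph (Fin n)) [DecidableRel G.Adj]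
    (P : Finpartition (Finset.univ : Finset (Fin n)))
    (hP : ∀ D ∈ P.parts, ∀ D' ∈ P.parts, ∀ x ∈ D, ∀ y ∈ D,
      (D'.filter (fun d => G.Adj x d)).card = (D'.filter (fun d => G.Adj y d)).card) :
    ∀ x ∈ charSpace P, adjEnd G x ∈ charSpace P := by
  intro v hv
  have hgen : ∀ D ∈ P.parts, adjEnd G (charVec D) ∈ charSpace P := by
    intro D hD
    apply const_mem_charSpace
    intro D' hD' a ha b hb
    rw [adjEnd_charVec, adjEnd_charVec]
    convert congrArg (Nat.cast (R := ℝ)) (hP D' hD' D hD a ha b hb)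
  refine Submodule.span_induction ?_ ?_ ?_ ?_ hv
  · rintro _ ⟨D, hD, rfl⟩; exact hgen D hD
  · rw [map_zero]; exact Submodule.zero_mem _
  · intro a b _ _ ha hb; rw [map_add]; exact Submodule.add_mem _ ha hb
  · intro r a _ ha; rw [_root_.map_smul]; exact Submodule.smul_mem _ _ ha

private lemma projSpan_le_Ypart {n : ℕ} (G : SimpleGraph (Fin n)) [DecidableRel G.Adj]
    (P : Finpartition (Finset.univ : Finset (Fin n))) (lam : ℝ) (C : Finset (Fin n)) :
    projSpan G P lam C ≤ Ypart G P lam := by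
  apply Submodule.span_le.mpr
  rintro v ⟨x, hx, rfl⟩
  exact Submodule.coe_mem _

open scoped RealInnerProductSpace in
private lemma adjEnd_isSymmetric {n : ℕ} (G : SimpleGraph (Fin n)) [DecidableRel G.Adj] :
    (adjEnd G).IsSymmetric := by
  apply Matrix.isHermitian_iff_isSymmetric.mp
  ext i j
  simp [Matrix.conjTranspose_apply, SimpleGraph.adj_comm]

open scoped RealInnerProductSpace in
private lemma charVec_eq_sum_single {n : ℕ} (C : Finset (Fin n)) :
    charVec C = ∑ u ∈ C, EuclideanSpace.single u (1 : ℝ) := by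
  ext x
  rw [euclid_sum_apply]
  simp only [EuclideanSpace.single_apply]
  rw [Finset.sum_ite_eq]
  rfl

set_option maxHeartbeats 1000000

/-- Lemma (separating pseudo-orbits): let `Π` be an equitable partition for `G`, let
`C₁, C₂` be two non-singleton cells of `Π`, and `λ` an eigenvalue of `A(G)`. With
`W_i = span{proj_{Y_{λ,Π}}(e_x) : x ∈ C_i}`, the projections of `e_u` (`u ∈ C₂`) onto
`W₁` all coincide if and only if `W₁ ⊥ W₂`. -/
theorem separating_pseudo_orbits
    {n : ℕ} (G : SimpleGraph (Fin n)) [DecidableRel G.Adj]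
    (P : Finpartition (Finset.univ : Finset (Fin n)))
    (hP : ∀ D ∈ P.parts, ∀ D' ∈ P.parts, ∀ x ∈ D, ∀ y ∈ D,
      (D'.filter (fun d => G.Adj x d)).card = (D'.filter (fun d => G.Adj y d)).card)
    (C₁ C₂ : Finset (Fin n)) (hC₁ : C₁ ∈ P.parts) (hC₂ : C₂ ∈ P.parts)
    (hC₁card : 1 < C₁.card) (hC₂card : 1 < C₂.card)
    (lam : ℝ) (hlam : Module.End.HasEigenvalue (adjEnd G) lam) :
    (∀ u ∈ C₂, ∀ v ∈ C₂,
      (Submodule.orthogonalProjectionOnto (projSpan G P lam C₁) (EuclideanSpace.single u (1 : ℝ)) :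
        projSpan G P lam C₁) =
      (Submodule.orthogonalProjectionOnto (projSpan G P lam C₁) (EuclideanSpace.single v (1 : ℝ)) :
        projSpan G P lam C₁)) ↔
    projSpan G P lam C₁ ≤ (projSpan G P lam C₂)ᗮ := by
    classical
  have hsym := adjEnd_isSymmetric G
  have hinv := charSpace_invariant G P hP
  -- anything in Y is orthogonal to charVec C₂
  have hkey : ∀ w ∈ Ypart G P lam, ⟪charVec C₂, w⟫ = 0 := fun w hw =>
    key_orth (adjEnd G) hsym (charSpace P) hinv lam
      (Submodule.subset_span ⟨C₂, hC₂, rfl⟩) hw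
  have hW₁Y : projSpan G P lam C₁ ≤ Ypart G P lam := projSpan_le_Ypart G P lam C₁
  constructor
  · intro h
    obtain ⟨u₀, hu₀⟩ := Finset.card_pos.mp (by omega : 0 < C₂.card)
    set p := Submodule.orthogonalProjectionOnto (projSpan G P lam C₁) (EuclideanSpace.single u₀ (1:ℝ)) with hp
    have hzero : Submodule.orthogonalProjectionOnto (projSpan G P lam C₁) (charVec C₂) = 0 := by
      rw [Submodule.orthogonalProjectionOnto_eq_zero_iff]
      exact (Submodule.mem_orthogonal' _ _).mpr fun w hw => hkey w (hW₁Y hw)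
    have hsum : ∑ u ∈ C₂,
        Submodule.orthogonalProjectionOnto (projSpan G P lam C₁) (EuclideanSpace.single u (1:ℝ)) = 0 := by
      rw [← map_sum, ← charVec_eq_sum_single, hzero]
    have hsum2 : ∑ u ∈ C₂,
        Submodule.orthogonalProjectionOnto (projSpan G P lam C₁) (EuclideanSpace.single u (1:ℝ))
        = C₂.card • p := by
      rw [Finset.sum_congr rfl fun u hu => h u hu u₀ hu₀, Finset.sum_const]
    have hcard : (C₂.card : ℝ) ≠ 0 := Nat.cast_ne_zero.mpr (by omega)
    have hpz : p = 0 := by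
      have h1 : (C₂.card : ℝ) • p = 0 := by
        rw [Nat.cast_smul_eq_nsmul, ← hsum2, hsum]
      rcases smul_eq_zero.mp h1 with h | h
      · exact absurd h hcard
      · exact h
    have hpu : ∀ u ∈ C₂, EuclideanSpace.single u (1:ℝ) ∈ (projSpan G P lam C₁)ᗮ := by
      intro u hu
      rw [← Submodule.orthogonalProjectionOnto_eq_zero_iff]
      rw [h u hu u₀ hu₀, ← hp, hpz]
    have hW₂W₁ : projSpan G P lam C₂ ≤ (projSpan G P lam C₁)ᗮ := by
      apply Submodule.span_le.mpr
      rintro v ⟨u, hu, rfl⟩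
      rw [SetLike.mem_coe, Submodule.mem_orthogonal']
      intro w hw
      have h1 : ⟪EuclideanSpace.single u (1:ℝ) - ((Submodule.orthogonalProjectionOnto (Ypart G P lam) (EuclideanSpace.single u (1:ℝ)) : Ypart G P lam) : EuclideanSpace ℝ (Fin n)), w⟫ = 0 :=
          Submodule.starProjection_inner_eq_zero (K := Ypart G P lam) (EuclideanSpace.single u (1:ℝ)) w (hW₁Y hw)
      have h2 : ⟪EuclideanSpace.single u (1:ℝ), w⟫ = 0 :=
        (Submodule.mem_orthogonal' _ _).mp (hpu u hu) w hw
      rw [inner_sub_left, h2] at h1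
      linarith
    exact (Submodule.le_orthogonal_orthogonal _).trans (Submodule.orthogonal_le hW₂W₁)
  · intro h
    have key : ∀ u ∈ C₂,
        Submodule.orthogonalProjectionOnto (projSpan G P lam C₁) (EuclideanSpace.single u (1:ℝ)) = 0 := by
      intro u hu
      rw [Submodule.orthogonalProjectionOnto_eq_zero_iff, Submodule.mem_orthogonal']
      intro w hw
      have h1 : ⟪EuclideanSpace.single u (1:ℝ) - ((Submodule.orthogonalProjectionOnto (Ypart G P lam) (EuclideanSpace.single u (1:ℝ)) : Ypart G P lam) : EuclideanSpace ℝ (Fin n)), w⟫ = 0 :=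
          Submodule.starProjection_inner_eq_zero (K := Ypart G P lam) (EuclideanSpace.single u (1:ℝ)) w (hW₁Y hw)
      have hgen : ((Submodule.orthogonalProjectionOnto (Ypart G P lam) (EuclideanSpace.single u (1:ℝ)) :
          Ypart G P lam) : EuclideanSpace ℝ (Fin n)) ∈ projSpan G P lam C₂ :=
        Submodule.subset_span ⟨u, hu, rfl⟩
      have h2 : ⟪((Submodule.orthogonalProjectionOnto (Ypart G P lam) (EuclideanSpace.single u (1:ℝ)) :
          Ypart G P lam) : EuclideanSpace ℝ (Fin n)), w⟫ = 0 :=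
        (Submodule.mem_orthogonal _ w).mp (h hw) _ hgen
      rw [inner_sub_left, h2] at h1
      linarith
    intro u hu v hv
    rw [key u hu, key v hv]
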